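/- For the heat kernel embedding x_t(u) = (1/√d_u)(e^{-tλ_1}f_1(u),...,e^{-t λ_n}f_n(u)), if t satisfies t ≥ 3 log n / λ_{k+1} and t ≤ 1/(2λ_k), then for all u, v: (1/(2e))·‖F(u)-F(v)‖² ≤ ‖x_t(u)-x_t(v)‖² ≤ ‖F(u)-F(v)‖² + n^{-5}, where F(u) = (1/√d_u)(f_1(u),...,f_k(u)). -/

import Mathlib

/-- For the heat kernel embedding
`x_t(u) = (1/√d_u)(e^{-t λ_1} f_1(u), …, e^{-t λ_n} f_n(u))`, if `t` satisfies
`t λ_{k+1} ≥ 3 log n` and `2 t λ_k ≤ 1`, then for all vertices `u, v`: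
`(1/(2e)) ‖F(u) - F(v)‖² ≤ ‖x_t(u) - x_t(v)‖² ≤ ‖F(u) - F(v)‖² + n^{-5}`,
where `F(u) = (1/√d_u)(f_1(u), …, f_k(u))`. -/
theorem stmt_16 (n k : ℕ) (hk : 1 ≤ k) (hkn : k < n) (hn : 4 ≤ n)
    (d : Fin n → ℝ) (hd : ∀ u, 1 ≤ d u)
    (lam : Fin n → ℝ) (hmono : Monotone lam)
    (hnonneg : ∀ i, 0 ≤ lam i) (hle2 : ∀ i, lam i ≤ 2)
    (f : Fin n → Fin n → ℝ)
    (hrows : ∀ i j : Fin n, (∑ u, f i u * f j u) = if i = j then 1 else 0)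
    (hcols : ∀ u v : Fin n, (∑ i, f i u * f i v) = if u = v then 1 else 0)
    (t : ℝ) (ht0 : 0 < t)
    (ht1 : 3 * Real.log n ≤ t * lam ⟨k, hkn⟩)
    (ht2 : 2 * t * lam ⟨k - 1, by omega⟩ ≤ 1)
    (x : Fin n → Fin n → ℝ)
    (hx : ∀ u i, x u i = Real.exp (-(t * lam i)) * f i u / Real.sqrt (d u))
    (F : Fin n → Fin k → ℝ)
    (hF : ∀ (u : Fin n) (j : Fin k), F u j = f (Fin.castLE hkn.le j) u / Real.sqrt (d u)) :
    ∀ u v : Fin n,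
      (1 / (2 * Real.exp 1)) * (∑ j, (F u j - F v j) ^ 2) ≤ (∑ i, (x u i - x v i) ^ 2) ∧
      (∑ i, (x u i - x v i) ^ 2) ≤ (∑ j, (F u j - F v j) ^ 2) + (n : ℝ) ^ (-(5 : ℤ)) := by
  intro u v
  have hn4 : (4:ℝ) ≤ (n:ℝ) := by exact_mod_cast hn
  have hn0 : (0:ℝ) < (n:ℝ) := by linarith
  have hdu : (0:ℝ) < d u := lt_of_lt_of_le one_pos (hd u)
  have hdv : (0:ℝ) < d v := lt_of_lt_of_le one_pos (hd v)
  have hsu : Real.sqrt (d u) * Real.sqrt (d u) = d u := Real.mul_self_sqrt hdu.le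
  have hsv : Real.sqrt (d v) * Real.sqrt (d v) = d v := Real.mul_self_sqrt hdv.le
  have hsu0 : Real.sqrt (d u) ≠ 0 := by positivity
  have hsv0 : Real.sqrt (d v) ≠ 0 := by positivity
  set a : Fin n → ℝ := fun i => f i u / Real.sqrt (d u) - f i v / Real.sqrt (d v) with ha
  -- per-term identity for x
  have hxterm : ∀ i, (x u i - x v i) ^ 2 = Real.exp (-(2 * (t * lam i))) * (a i) ^ 2 := by
    intro i
    have h2 : Real.exp (-(2 * (t * lam i)))
        = Real.exp (-(t * lam i)) * Real.exp (-(t * lam i)) := by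
      rw [← Real.exp_add]; ring_nf
    rw [hx u i, hx v i, h2, ha]
    field_simp
  -- expansion of a i ^ 2
  have hexp_a : ∀ i, (a i) ^ 2 = (f i u * f i u) * (d u)⁻¹ + (f i v * f i v) * (d v)⁻¹
      - (f i u * f i v) * (2 * (Real.sqrt (d u) * Real.sqrt (d v))⁻¹) := by
    intro i
    have key : ∀ p q s r : ℝ, s ≠ 0 → r ≠ 0 →
        (p / s - q / r) ^ 2 = p * p * (s * s)⁻¹ + q * q * (r * r)⁻¹
          - p * q * (2 * (s * r)⁻¹) := by
      intro p q s r hs hr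
      field_simp
      ring
    rw [ha]
    rw [key _ _ _ _ hsu0 hsv0, hsu, hsv]
  -- total sum of a² ≤ 2
  have hsum_a : (∑ i, (a i) ^ 2) ≤ 2 := by
    have hsplit : (∑ i, (a i) ^ 2)
        = (∑ i, f i u * f i u) * (d u)⁻¹ + (∑ i, f i v * f i v) * (d v)⁻¹
          - (∑ i, f i u * f i v) * (2 * (Real.sqrt (d u) * Real.sqrt (d v))⁻¹) := by
      rw [Finset.sum_mul, Finset.sum_mul, Finset.sum_mul, ← Finset.sum_add_distrib,
        ← Finset.sum_sub_distrib]
      exact Finset.sum_congr rfl fun i _ => hexp_a i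
    rw [hsplit, hcols u u, hcols v v, hcols u v]
    have h1 : (d u)⁻¹ ≤ 1 := by
      rw [inv_le_one_iff₀]; right; exact hd u
    have h2 : (d v)⁻¹ ≤ 1 := by
      rw [inv_le_one_iff₀]; right; exact hd v
    have h3 : (0:ℝ) ≤ (if u = v then (1:ℝ) else 0) * (2 * (Real.sqrt (d u) * Real.sqrt (d v))⁻¹) := by
      apply mul_nonneg
      · split <;> norm_num
      · positivity
    have h3' : (0:ℝ) ≤ 2 * (Real.sqrt (d u) * Real.sqrt (d v))⁻¹ := by positivity
    split_ifs <;> linarith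
  -- the filter set
  set S : Finset (Fin n) := Finset.univ.filter (fun i => (i : ℕ) < k) with hS
  have hFsum : (∑ j, (F u j - F v j) ^ 2) = ∑ i ∈ S, (a i) ^ 2 := by
    have hmap : Finset.univ.map (Fin.castLEEmb hkn.le) = S := by
      ext i
      simp only [Finset.mem_map, Finset.mem_univ, true_and, hS, Finset.mem_filter,
        Fin.castLEEmb_apply]
      constructor
      · rintro ⟨j, rfl⟩; exact j.isLt
      · intro hi; exact ⟨⟨(i : ℕ), hi⟩, rfl⟩
    rw [← hmap, Finset.sum_map]
    refine Finset.sum_congr rfl fun j _ => ?_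
    rw [hF u j, hF v j, ha]
    rfl
  have hxsum : (∑ i, (x u i - x v i) ^ 2)
      = (∑ i ∈ S, Real.exp (-(2 * (t * lam i))) * (a i) ^ 2)
        + ∑ i ∈ Sᶜ, Real.exp (-(2 * (t * lam i))) * (a i) ^ 2 := by
    rw [Finset.sum_add_sum_compl S]
    exact Finset.sum_congr rfl fun i _ => hxterm i
  have hepos : (0:ℝ) < Real.exp 1 := Real.exp_pos 1
  constructor
  · -- Lower bound
    have hlow : ∀ i ∈ S, (1 / (2 * Real.exp 1)) * (a i) ^ 2
        ≤ Real.exp (-(2 * (t * lam i))) * (a i) ^ 2 := by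
      intro i hi
      have hik : (i : ℕ) < k := by simpa [hS] using hi
      have hle : lam i ≤ lam ⟨k - 1, by omega⟩ := hmono (by simp [Fin.le_def]; omega)
      have h1 : 2 * (t * lam i) ≤ 1 := by nlinarith [hnonneg i, ht0.le]
      have h2 : Real.exp (-1) ≤ Real.exp (-(2 * (t * lam i))) :=
        Real.exp_le_exp.mpr (by linarith)
      have h3 : 1 / (2 * Real.exp 1) ≤ Real.exp (-1) := by
        rw [Real.exp_neg]
        rw [div_le_iff₀ (by positivity)]
        rw [inv_mul_eq_div, le_div_iff₀ hepos]
        nlinarith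
      exact mul_le_mul_of_nonneg_right (le_trans h3 h2) (sq_nonneg _)
    calc (1 / (2 * Real.exp 1)) * (∑ j, (F u j - F v j) ^ 2)
        = ∑ i ∈ S, (1 / (2 * Real.exp 1)) * (a i) ^ 2 := by
          rw [hFsum, Finset.mul_sum]
      _ ≤ ∑ i ∈ S, Real.exp (-(2 * (t * lam i))) * (a i) ^ 2 :=
          Finset.sum_le_sum hlow
      _ ≤ (∑ i ∈ S, Real.exp (-(2 * (t * lam i))) * (a i) ^ 2)
            + ∑ i ∈ Sᶜ, Real.exp (-(2 * (t * lam i))) * (a i) ^ 2 := by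
          have : (0:ℝ) ≤ ∑ i ∈ Sᶜ, Real.exp (-(2 * (t * lam i))) * (a i) ^ 2 :=
            Finset.sum_nonneg fun i _ => by positivity
          linarith
      _ = ∑ i, (x u i - x v i) ^ 2 := hxsum.symm
  · -- Upper bound
    have hup1 : ∀ i ∈ S, Real.exp (-(2 * (t * lam i))) * (a i) ^ 2 ≤ (a i) ^ 2 := by
      intro i _
      have : Real.exp (-(2 * (t * lam i))) ≤ 1 :=
        Real.exp_le_one_iff.mpr (by nlinarith [hnonneg i, ht0.le])
      calc Real.exp (-(2 * (t * lam i))) * (a i) ^ 2 ≤ 1 * (a i) ^ 2 :=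
            mul_le_mul_of_nonneg_right this (sq_nonneg _)
        _ = (a i) ^ 2 := one_mul _
    have hn6 : Real.exp (-(6 * Real.log n)) = ((n:ℝ) ^ (6:ℕ))⁻¹ := by
      rw [Real.exp_neg]
      congr 1
      rw [show (6:ℝ) * Real.log n = ((6:ℕ):ℝ) * Real.log n by norm_num,
        Real.exp_nat_mul, Real.exp_log hn0]
    have hup2 : ∀ i ∈ Sᶜ, Real.exp (-(2 * (t * lam i))) * (a i) ^ 2
        ≤ ((n:ℝ) ^ (6:ℕ))⁻¹ * (a i) ^ 2 := by
      intro i hi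
      have hik : k ≤ (i : ℕ) := by
        simp only [hS, Finset.mem_compl, Finset.mem_filter, Finset.mem_univ, true_and,
          not_lt] at hi
        exact hi
      have hle : lam ⟨k, hkn⟩ ≤ lam i := hmono (by simp [Fin.le_def]; omega)
      have h1 : 6 * Real.log n ≤ 2 * (t * lam i) := by nlinarith [ht0.le]
      have h2 : Real.exp (-(2 * (t * lam i))) ≤ Real.exp (-(6 * Real.log n)) :=
        Real.exp_le_exp.mpr (by linarith)
      rw [hn6] at h2
      exact mul_le_mul_of_nonneg_right h2 (sq_nonneg _)
    have hcompl : (∑ i ∈ Sᶜ, (a i) ^ 2) ≤ 2 := by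
      refine le_trans ?_ hsum_a
      exact Finset.sum_le_sum_of_subset_of_nonneg (Finset.subset_univ _)
        (fun i _ _ => sq_nonneg _)
    have hp5 : (0:ℝ) < (n:ℝ) ^ (5:ℕ) := by positivity
    have hp6 : (0:ℝ) < (n:ℝ) ^ (6:ℕ) := by positivity
    have hlast : ((n:ℝ) ^ (6:ℕ))⁻¹ * 2 ≤ (n:ℝ) ^ (-(5:ℤ)) := by
      have h5 : (n:ℝ) ^ (-(5:ℤ)) = ((n:ℝ) ^ (5:ℕ))⁻¹ := by
        rw [zpow_neg]
        norm_cast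
      rw [h5, inv_mul_eq_div, inv_eq_one_div, div_le_div_iff₀ hp6 hp5]
      have hmul : (n:ℝ) ^ (5:ℕ) * 4 ≤ (n:ℝ) ^ (5:ℕ) * (n:ℝ) :=
        mul_le_mul_of_nonneg_left hn4 hp5.le
      have h56 : (n:ℝ) ^ (5:ℕ) * (n:ℝ) = (n:ℝ) ^ (6:ℕ) := by ring
      linarith
    calc (∑ i, (x u i - x v i) ^ 2)
        = (∑ i ∈ S, Real.exp (-(2 * (t * lam i))) * (a i) ^ 2)
            + ∑ i ∈ Sᶜ, Real.exp (-(2 * (t * lam i))) * (a i) ^ 2 := hxsum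
      _ ≤ (∑ i ∈ S, (a i) ^ 2) + ∑ i ∈ Sᶜ, ((n:ℝ) ^ (6:ℕ))⁻¹ * (a i) ^ 2 :=
          add_le_add (Finset.sum_le_sum hup1) (Finset.sum_le_sum hup2)
      _ = (∑ j, (F u j - F v j) ^ 2) + ((n:ℝ) ^ (6:ℕ))⁻¹ * (∑ i ∈ Sᶜ, (a i) ^ 2) := by
          rw [hFsum, Finset.mul_sum]
      _ ≤ (∑ j, (F u j - F v j) ^ 2) + ((n:ℝ) ^ (6:ℕ))⁻¹ * 2 :=
          add_le_add le_rfl (mul_le_mul_of_nonneg_left hcompl (by positivity))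
      _ ≤ (∑ j, (F u j - F v j) ^ 2) + (n:ℝ) ^ (-(5:ℤ)) := by linarith
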